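/- (Deterministic core of the Adam lower bound.) Let g ∈ ℝ^d, ε > 0, and g∞ > 256·ε, and suppose ‖g‖∞ ≥ g∞. For every coordinate i satisfying ‖g‖∞/60 < |g_i| < ‖g‖∞/16, the per-coordinate deviation between the unquantized and quantized first Adam step satisfies | g_i/(|g_i| + ε) − Q(g)_i/(√(Q(g²)_i) + ε) | ≥ g∞/(256·ε), where g² is the entrywise square of g and Q(g²) has nonnegative entries so the square root is defined. -/
import Mathlib


/-- 8-bit linear quantization of a finite-dimensional real vector: each
coordinate is scaled by `127 / ‖x‖∞`, rounded to the nearest integer, and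
rescaled by `‖x‖∞ / 127`.  Here `‖x‖` is the sup norm (the norm on the
Pi type `ι → ℝ`). -/
noncomputable def Q8 {ι : Type*} [Fintype ι] (x : ι → ℝ) : ι → ℝ :=
  fun i => (‖x‖ / 127) * ((round (127 * x i / ‖x‖) : ℤ) : ℝ)

lemma pi_norm_sq {d : ℕ} (g : Fin d → ℝ) (i : Fin d) :
    ‖(fun j => (g j) ^ 2)‖ = ‖g‖ ^ 2 := by
  have hne : (Finset.univ : Finset (Fin d)).Nonempty := ⟨i, Finset.mem_univ i⟩
  obtain ⟨j, -, hj⟩ := Finset.exists_mem_eq_sup Finset.univ hne (fun b => ‖g b‖₊)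
  have hgj : ‖g‖ = |g j| := by
    have : ‖g‖₊ = ‖g j‖₊ := by rw [Pi.nnnorm_def]; exact hj
    simpa [Real.norm_eq_abs] using congrArg (fun x : NNReal => (x : ℝ)) this
  apply le_antisymm
  · rw [pi_norm_le_iff_of_nonneg (by positivity)]
    intro k
    have hk : |g k| ≤ ‖g‖ := by
      simpa [Real.norm_eq_abs] using norm_le_pi_norm g k
    have : ‖(g k) ^ 2‖ = |g k| ^ 2 := by
      rw [Real.norm_eq_abs, sq_abs, abs_pow, sq_abs]
    rw [this]
    exact pow_le_pow_left₀ (abs_nonneg _) hk 2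
  · have := norm_le_pi_norm (fun j => (g j) ^ 2) j
    have h2 : ‖(g j) ^ 2‖ = |g j| ^ 2 := by
      rw [Real.norm_eq_abs, sq_abs, abs_pow, sq_abs]
    rw [h2] at this
    rw [hgj]
    exact this

/-- **Deterministic core of the Adam lower bound.**  Let `g ∈ ℝ^d`,
`ε > 0`, `g∞ > 256·ε` and `‖g‖∞ ≥ g∞`.  For every coordinate `i` with
`‖g‖∞/60 < |g_i| < ‖g‖∞/16`, the per-coordinate deviation between the
unquantized and quantized first Adam step satisfies
`|g_i/(|g_i| + ε) − Q(g)_i/(√(Q(g²)_i) + ε)| ≥ g∞/(256·ε)`. -/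
theorem adam_quant_coord_deviation {d : ℕ} (g : Fin d → ℝ)
    (ε ginf : ℝ) (hε : 0 < ε) (hginf : 256 * ε < ginf)
    (hg : ginf ≤ ‖g‖) (i : Fin d)
    (hlo : ‖g‖ / 60 < |g i|) (hhi : |g i| < ‖g‖ / 16) :
    ginf / (256 * ε) ≤
      |g i / (|g i| + ε) -
        Q8 g i / (Real.sqrt (Q8 (fun j => (g j) ^ 2) i) + ε)| := by
  set M := ‖g‖ with hMdef
  have hM : 0 < M := lt_of_lt_of_le (lt_trans (by positivity) hginf) hg
  -- Q8 of the squared vector vanishes at i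
  have hsq : ‖(fun j => (g j) ^ 2)‖ = M ^ 2 := pi_norm_sq g i
  have habs : 0 ≤ (g i) ^ 2 := sq_nonneg _
  have hgi2 : (g i) ^ 2 < M ^ 2 / 256 := by
    have : |g i| ^ 2 < (M / 16) ^ 2 :=
      pow_lt_pow_left₀ hhi (abs_nonneg _) (by norm_num)
    rw [sq_abs] at this; nlinarith
  have hround0 : round (127 * (g i) ^ 2 / ‖(fun j => (g j) ^ 2)‖) = 0 := by
    rw [hsq, round_eq_zero_iff]
    constructor
    · have : 0 ≤ 127 * (g i) ^ 2 / M ^ 2 := by positivity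
      linarith
    · rw [div_lt_iff₀ (by positivity)]
      nlinarith
  have hQ2 : Q8 (fun j => (g j) ^ 2) i = 0 := by
    unfold Q8
    rw [hround0]
    simp
  rw [hQ2, Real.sqrt_zero, zero_add]
  -- bound on |Q8 g i|
  have hrarg : (127 : ℝ) / 60 < |127 * g i / M| := by
    rw [abs_div, abs_of_pos hM, abs_mul, abs_of_pos (by norm_num : (0:ℝ) < 127)]
    rw [div_lt_div_iff₀ (by norm_num) hM]
    have := (div_lt_iff₀ (by norm_num : (0:ℝ) < 60)).mp hlo
    nlinarith
  have hroundb : (127 : ℝ) / 60 - 1 / 2 ≤ |((round (127 * g i / M) : ℤ) : ℝ)| := by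
    have h1 := abs_sub_round (127 * g i / M)
    have h2 := abs_sub_abs_le_abs_sub (127 * g i / M) ((round (127 * g i / M) : ℤ) : ℝ)
    linarith
  have hQg : M / 127 * (127 / 60 - 1 / 2) ≤ |Q8 g i| := by
    unfold Q8
    rw [abs_mul, abs_of_pos (by positivity : (0:ℝ) < M / 127)]
    exact mul_le_mul_of_nonneg_left hroundb (by positivity)
  -- first term is at most 1
  have hfirst : |g i / (|g i| + ε)| ≤ 1 := by
    rw [abs_div, abs_of_pos (by positivity : (0:ℝ) < |g i| + ε), div_le_one (by positivity)]
    linarith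
  have hsecond : M / 127 * (127 / 60 - 1 / 2) / ε ≤ |Q8 g i / ε| := by
    rw [abs_div, abs_of_pos hε]
    gcongr
  have hkey := abs_sub_abs_le_abs_sub (Q8 g i / ε) (g i / (|g i| + ε))
  rw [abs_sub_comm] at hkey
  have hfin : ginf / (256 * ε) ≤ M / 127 * (127 / 60 - 1 / 2) / ε - 1 := by
    have hX : ginf / 256 ≤ M / 127 * (127 / 60 - 1 / 2) - ε := by nlinarith
    have heq : M / 127 * (127 / 60 - 1 / 2) / ε - 1 =
        (M / 127 * (127 / 60 - 1 / 2) - ε) / ε := by field_simp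
    rw [heq, show ginf / (256 * ε) = (ginf / 256) / ε by ring]
    gcongr
  linarith
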